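/- A ring R is Zhou nil-clean if and only if every square element of R is the sum of a tripotent, an involution and a nilpotent that pairwise commute. -/

import Mathlib

universe u

section Aux
variable {S : Type u} [CommRing S]

private lemma zcNilpMul (x y : S) (hx : IsNilpotent x) : IsNilpotent (x * y) := by
  obtain ⟨n, hn⟩ := hx
  exact ⟨n, by rw [mul_pow, hn, zero_mul]⟩

private lemma zcNilpOfSq {x : S} (h : IsNilpotent (x ^ 2)) : IsNilpotent x := by
  obtain ⟨n, hn⟩ := h
  exact ⟨2 * n, by rw [pow_mul, hn]⟩

private lemma zcIdemPow :
    ∀ (k : ℕ) (u : S), (u ^ 2 - u) ^ (2 ^ k) = 0 → ∃ A, A ^ 2 = A ∧ IsNilpotent (A - u) := by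
  intro k
  induction k with
  | zero =>
    intro u h
    rw [pow_zero, pow_one] at h
    exact ⟨u, by linear_combination h, by rw [sub_self]; exact IsNilpotent.zero⟩
  | succ k ih =>
    intro u h
    have key : ((3 * u ^ 2 - 2 * u ^ 3) ^ 2 - (3 * u ^ 2 - 2 * u ^ 3))
        = (u ^ 2 - u) ^ 2 * (4 * (u ^ 2 - u) - 3) := by ring
    obtain ⟨A, hA, hn⟩ := ih (3 * u ^ 2 - 2 * u ^ 3) (by
      rw [key, mul_pow, ← pow_mul]
      have h2 : 2 * 2 ^ k = 2 ^ (k + 1) := by rw [pow_succ]; ring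
      rw [h2, h, zero_mul])
    refine ⟨A, hA, ?_⟩
    have h2 : IsNilpotent ((3 * u ^ 2 - 2 * u ^ 3) - u) := by
      have e : (3 * u ^ 2 - 2 * u ^ 3) - u = (u ^ 2 - u) * (1 - 2 * u) := by ring
      rw [e]
      exact zcNilpMul _ _ ⟨2 ^ (k + 1), h⟩
    have := (Commute.all (A - (3 * u ^ 2 - 2 * u ^ 3)) ((3 * u ^ 2 - 2 * u ^ 3) - u)).isNilpotent_add hn h2
    simpa using this

private lemma zcIdem (u : S) (h : IsNilpotent (u ^ 2 - u)) :
    ∃ A, A ^ 2 = A ∧ IsNilpotent (A - u) := by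
  obtain ⟨m, hm⟩ := h
  exact zcIdemPow m u (pow_eq_zero_of_le (Nat.lt_two_pow_self (n := m)).le hm)

/-- The prime-quotient trick. -/
private lemma zcCorner (a Z : S) (hf : IsNilpotent (a ^ 5 - 5 * a ^ 3 + 4 * a))
    (h30 : IsNilpotent (30 : S))
    (H2 : ∀ (D : Type u) [CommRing D] [IsDomain D] (g : S →+* D),
      (2 : D) = 0 → (g a) ^ 2 = g a → g Z = 0)
    (H3 : ∀ (D : Type u) [CommRing D] [IsDomain D] (g : S →+* D),
      (3 : D) = 0 → (g a) ^ 3 = g a → g Z = 0)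
    (H5 : ∀ (D : Type u) [CommRing D] [IsDomain D] (g : S →+* D),
      (5 : D) = 0 → (g a) ^ 5 = g a → g Z = 0) :
    IsNilpotent Z := by
  rw [nilpotent_iff_mem_prime]
  intro J hJ
  haveI := hJ
  rw [← Ideal.Quotient.eq_zero_iff_mem]
  set g := Ideal.Quotient.mk J with hg
  have hF : (g a) ^ 5 - 5 * (g a) ^ 3 + 4 * (g a) = 0 := by
    have h := (hf.map g).eq_zero
    simpa [map_ofNat g] using h
  have h30' : (30 : S ⧸ J) = 0 := by
    have h := (h30.map g).eq_zero
    simpa [map_ofNat g] using h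
  have h235 : (2 : S ⧸ J) * (3 * 5) = 0 := by linear_combination h30'
  rcases mul_eq_zero.mp h235 with h2 | h35
  · have key : (g a) ^ 3 * (g a - 1) ^ 2 = 0 := by
      linear_combination hF - (((g a) ^ 2 - g a) * ((g a) ^ 2 - 2 * (g a) - 2)) * h2
    rcases mul_eq_zero.mp key with h | h
    · have ha : g a = 0 := (pow_eq_zero_iff (by norm_num)).mp h
      exact H2 _ g h2 (by rw [ha]; ring)
    · have ha : g a = 1 := by
        have := (pow_eq_zero_iff (n := 2) (by norm_num)).mp h
        linear_combination this
      exact H2 _ g h2 (by rw [ha]; ring)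
  · rcases mul_eq_zero.mp h35 with h3 | h5
    · have key : g a * ((g a) ^ 2 - 1) ^ 2 = 0 := by
        linear_combination hF + (g a * ((g a) ^ 2 - 1)) * h3
      rcases mul_eq_zero.mp key with h | h
      · exact H3 _ g h3 (by rw [h]; ring)
      · have ha : (g a) ^ 2 = 1 := by
          have := (pow_eq_zero_iff (n := 2) (by norm_num)).mp h
          linear_combination this
        exact H3 _ g h3 (by linear_combination (g a) * ha)
    · have key : g a * (((g a) ^ 2 - 1) * ((g a) ^ 2 - 4)) = 0 := by
        linear_combination hF
      rcases mul_eq_zero.mp key with h | h'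
      · exact H5 _ g h5 (by rw [h]; ring)
      · rcases mul_eq_zero.mp h' with h | h
        · exact H5 _ g h5 (by linear_combination ((g a) * ((g a) ^ 2 + 1)) * h)
        · exact H5 _ g h5 (by linear_combination ((g a) * ((g a) ^ 2 + 4)) * h + (3 * (g a)) * h5)

end Aux

private lemma zcMem1 {S : Type u} [CommRing S] (a : S)
    (hf : IsNilpotent (a ^ 5 - 5 * a ^ 3 + 4 * a)) (h30 : IsNilpotent (30 : S)) :
    IsNilpotent ((18 * a ^ 4 + 12 * a ^ 3 + 20 * a ^ 2 + 41 * a) ^ 2 - (18 * a ^ 4 + 12 * a ^ 3 + 20 * a ^ 2 + 41 * a)) := by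
  apply zcCorner a _ hf h30
  · intro D _ _ g hpr ha
    simp only [map_add, map_sub, map_mul, map_pow, map_ofNat, map_one, map_neg]
    linear_combination (324 * (g a) ^ 6 + 756 * (g a) ^ 5 + 1620 * (g a) ^ 4 + 3576 * (g a) ^ 3 + 4942 * (g a) ^ 2 + 6570 * (g a) + 8231) * ha + (4095 * (g a)) * hpr
  · intro D _ _ g hpr ha
    simp only [map_add, map_sub, map_mul, map_pow, map_ofNat, map_one, map_neg]
    linear_combination (324 * (g a) ^ 5 + 432 * (g a) ^ 4 + 1188 * (g a) ^ 3 + 2388 * (g a) ^ 2 + 2554 * (g a) + 4016) * ha + (1405 * (g a) ^ 2 + 1325 * (g a)) * hpr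
  · intro D _ _ g hpr ha
    simp only [map_add, map_sub, map_mul, map_pow, map_ofNat, map_one, map_neg]
    linear_combination (324 * (g a) ^ 3 + 432 * (g a) ^ 2 + 864 * (g a) + 1956) * ha + (338 * (g a) ^ 4 + 412 * (g a) ^ 3 + 505 * (g a) ^ 2 + 383 * (g a)) * hpr

private lemma zcMem2 {S : Type u} [CommRing S] (a : S)
    (hf : IsNilpotent (a ^ 5 - 5 * a ^ 3 + 4 * a)) (h30 : IsNilpotent (30 : S)) :
    IsNilpotent ((18 * a ^ 4 - 12 * a ^ 3 + 20 * a ^ 2 + 4 * a) ^ 2 - (18 * a ^ 4 - 12 * a ^ 3 + 20 * a ^ 2 + 4 * a)) := by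
  apply zcCorner a _ hf h30
  · intro D _ _ g hpr ha
    simp only [map_add, map_sub, map_mul, map_pow, map_ofNat, map_one, map_neg]
    linear_combination (324 * (g a) ^ 6 - 108 * (g a) ^ 5 + 756 * (g a) ^ 4 + 420 * (g a) ^ 3 + 706 * (g a) ^ 2 + 878 * (g a) + 874) * ha + (435 * (g a)) * hpr
  · intro D _ _ g hpr ha
    simp only [map_add, map_sub, map_mul, map_pow, map_ofNat, map_one, map_neg]
    linear_combination (324 * (g a) ^ 5 - 432 * (g a) ^ 4 + 1188 * (g a) ^ 3 - 768 * (g a) ^ 2 + 1474 * (g a) - 596) * ha + (490 * (g a) ^ 2 - 200 * (g a)) * hpr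
  · intro D _ _ g hpr ha
    simp only [map_add, map_sub, map_mul, map_pow, map_ofNat, map_one, map_neg]
    linear_combination (324 * (g a) ^ 3 - 432 * (g a) ^ 2 + 864 * (g a) - 336) * ha + (122 * (g a) ^ 4 - 52 * (g a) ^ 3 + 172 * (g a) ^ 2 - 68 * (g a)) * hpr

private lemma zcMem3 {S : Type u} [CommRing S] (a : S)
    (hf : IsNilpotent (a ^ 5 - 5 * a ^ 3 + 4 * a)) (h30 : IsNilpotent (30 : S)) :
    IsNilpotent ((18 * a ^ 4 + 12 * a ^ 3 + 20 * a ^ 2 + 41 * a) * (18 * a ^ 4 - 12 * a ^ 3 + 20 * a ^ 2 + 4 * a)) := by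
  apply zcCorner a _ hf h30
  · intro D _ _ g hpr ha
    simp only [map_add, map_sub, map_mul, map_pow, map_ofNat, map_one, map_neg]
    linear_combination (324 * (g a) ^ 6 + 324 * (g a) ^ 5 + 900 * (g a) ^ 4 + 1710 * (g a) ^ 3 + 1666 * (g a) ^ 2 + 2566 * (g a) + 2730) * ha + (1365 * (g a)) * hpr
  · intro D _ _ g hpr ha
    simp only [map_add, map_sub, map_mul, map_pow, map_ofNat, map_one, map_neg]
    linear_combination (324 * (g a) ^ 5 + 900 * (g a) ^ 3 + 810 * (g a) ^ 2 + 856 * (g a) + 1710) * ha + (340 * (g a) ^ 2 + 570 * (g a)) * hpr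
  · intro D _ _ g hpr ha
    simp only [map_add, map_sub, map_mul, map_pow, map_ofNat, map_one, map_neg]
    linear_combination (324 * (g a) ^ 3 + 576 * (g a) + 810) * ha + (56 * (g a) ^ 4 + 180 * (g a) ^ 3 + 148 * (g a) ^ 2 + 162 * (g a)) * hpr

private lemma zcMem4 {S : Type u} [CommRing S] (a : S)
    (hf : IsNilpotent (a ^ 5 - 5 * a ^ 3 + 4 * a)) (h30 : IsNilpotent (30 : S)) :
    IsNilpotent ((24 * a ^ 4 + 18 * a ^ 3 + 6 * a ^ 2 + 12 * a) ^ 2 - (24 * a ^ 4 + 18 * a ^ 3 + 6 * a ^ 2 + 12 * a)) := by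
  apply zcCorner a _ hf h30
  · intro D _ _ g hpr ha
    simp only [map_add, map_sub, map_mul, map_pow, map_ofNat, map_one, map_neg]
    linear_combination (576 * (g a) ^ 6 + 1440 * (g a) ^ 5 + 2052 * (g a) ^ 4 + 2844 * (g a) ^ 3 + 3288 * (g a) ^ 2 + 3414 * (g a) + 3552) * ha + (1770 * (g a)) * hpr
  · intro D _ _ g hpr ha
    simp only [map_add, map_sub, map_mul, map_pow, map_ofNat, map_one, map_neg]
    linear_combination (576 * (g a) ^ 5 + 864 * (g a) ^ 4 + 1188 * (g a) ^ 3 + 1656 * (g a) ^ 2 + 1632 * (g a) + 1782) * ha + (590 * (g a) ^ 2 + 590 * (g a)) * hpr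
  · intro D _ _ g hpr ha
    simp only [map_add, map_sub, map_mul, map_pow, map_ofNat, map_one, map_neg]
    linear_combination (576 * (g a) ^ 3 + 864 * (g a) ^ 2 + 612 * (g a) + 792) * ha + (204 * (g a) ^ 4 + 198 * (g a) ^ 3 + 150 * (g a) ^ 2 + 156 * (g a)) * hpr

private lemma zcMem5 {S : Type u} [CommRing S] (a : S)
    (hf : IsNilpotent (a ^ 5 - 5 * a ^ 3 + 4 * a)) (h30 : IsNilpotent (30 : S)) :
    IsNilpotent ((24 * a ^ 4 + 12 * a ^ 3 + 6 * a ^ 2 - 12 * a) ^ 2 - (24 * a ^ 4 + 12 * a ^ 3 + 6 * a ^ 2 - 12 * a)) := by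
  apply zcCorner a _ hf h30
  · intro D _ _ g hpr ha
    simp only [map_add, map_sub, map_mul, map_pow, map_ofNat, map_one, map_neg]
    linear_combination (576 * (g a) ^ 6 + 1152 * (g a) ^ 5 + 1584 * (g a) ^ 4 + 1152 * (g a) ^ 3 + 876 * (g a) ^ 2 + 720 * (g a) + 858) * ha + (435 * (g a)) * hpr
  · intro D _ _ g hpr ha
    simp only [map_add, map_sub, map_mul, map_pow, map_ofNat, map_one, map_neg]
    linear_combination (576 * (g a) ^ 5 + 576 * (g a) ^ 4 + 1008 * (g a) ^ 3 + 144 * (g a) ^ 2 + 732 * (g a) - 12) * ha + (290 * (g a) ^ 2) * hpr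
  · intro D _ _ g hpr ha
    simp only [map_add, map_sub, map_mul, map_pow, map_ofNat, map_one, map_neg]
    linear_combination (576 * (g a) ^ 3 + 576 * (g a) ^ 2 + 432 * (g a) - 432) * ha + (60 * (g a) ^ 4 + 84 * (g a) ^ 3 + 114 * (g a) ^ 2 - 84 * (g a)) * hpr

private lemma zcMem6 {S : Type u} [CommRing S] (a : S)
    (hf : IsNilpotent (a ^ 5 - 5 * a ^ 3 + 4 * a)) (h30 : IsNilpotent (30 : S)) :
    IsNilpotent ((24 * a ^ 4 + 18 * a ^ 3 + 6 * a ^ 2 + 12 * a) * (24 * a ^ 4 + 12 * a ^ 3 + 6 * a ^ 2 - 12 * a)) := by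
  apply zcCorner a _ hf h30
  · intro D _ _ g hpr ha
    simp only [map_add, map_sub, map_mul, map_pow, map_ofNat, map_one, map_neg]
    linear_combination (576 * (g a) ^ 6 + 1296 * (g a) ^ 5 + 1800 * (g a) ^ 4 + 1980 * (g a) ^ 3 + 1944 * (g a) ^ 2 + 1944 * (g a) + 1800) * ha + (900 * (g a)) * hpr
  · intro D _ _ g hpr ha
    simp only [map_add, map_sub, map_mul, map_pow, map_ofNat, map_one, map_neg]
    linear_combination (576 * (g a) ^ 5 + 720 * (g a) ^ 4 + 1080 * (g a) ^ 3 + 900 * (g a) ^ 2 + 1044 * (g a) + 900) * ha + (300 * (g a) ^ 2 + 300 * (g a)) * hpr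
  · intro D _ _ g hpr ha
    simp only [map_add, map_sub, map_mul, map_pow, map_ofNat, map_one, map_neg]
    linear_combination (576 * (g a) ^ 3 + 720 * (g a) ^ 2 + 504 * (g a) + 180) * ha + (108 * (g a) ^ 4 + 144 * (g a) ^ 3 + 72 * (g a) ^ 2 + 36 * (g a)) * hpr

private lemma zcMem7 {S : Type u} [CommRing S] (a : S)
    (hf : IsNilpotent (a ^ 5 - 5 * a ^ 3 + 4 * a)) (h30 : IsNilpotent (30 : S)) :
    IsNilpotent (a - ((18 * a ^ 4 + 12 * a ^ 3 + 20 * a ^ 2 + 41 * a) - (18 * a ^ 4 - 12 * a ^ 3 + 20 * a ^ 2 + 4 * a) + (24 * a ^ 4 + 18 * a ^ 3 + 6 * a ^ 2 + 12 * a) - (24 * a ^ 4 + 12 * a ^ 3 + 6 * a ^ 2 - 12 * a))) := by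
  apply zcCorner a _ hf h30
  · intro D _ _ g hpr ha
    simp only [map_add, map_sub, map_mul, map_pow, map_ofNat, map_one, map_neg]
    linear_combination (-30 * (g a) - 30) * ha + (-45 * (g a)) * hpr
  · intro D _ _ g hpr ha
    simp only [map_add, map_sub, map_mul, map_pow, map_ofNat, map_one, map_neg]
    linear_combination (-30) * ha + (-30 * (g a)) * hpr
  · intro D _ _ g hpr ha
    simp only [map_add, map_sub, map_mul, map_pow, map_ofNat, map_one, map_neg]
    linear_combination (0) * ha + (-6 * (g a) ^ 3 - 12 * (g a)) * hpr

private lemma zcMem8 {S : Type u} [CommRing S] (a : S)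
    (hf : IsNilpotent (a ^ 5 - 5 * a ^ 3 + 4 * a)) (h30 : IsNilpotent (30 : S)) :
    IsNilpotent ((12 * a ^ 4 + 22 * a ^ 2 + 6) ^ 2 - (12 * a ^ 4 + 22 * a ^ 2 + 6)) := by
  apply zcCorner a _ hf h30
  · intro D _ _ g hpr ha
    simp only [map_add, map_sub, map_mul, map_pow, map_ofNat, map_one, map_neg]
    linear_combination (144 * (g a) ^ 6 + 144 * (g a) ^ 5 + 672 * (g a) ^ 4 + 672 * (g a) ^ 3 + 1288 * (g a) ^ 2 + 1288 * (g a) + 1530) * ha + (765 * (g a) + 15) * hpr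
  · intro D _ _ g hpr ha
    simp only [map_add, map_sub, map_mul, map_pow, map_ofNat, map_one, map_neg]
    linear_combination (144 * (g a) ^ 5 + 672 * (g a) ^ 3 + 1288 * (g a)) * ha + (510 * (g a) ^ 2 + 10) * hpr
  · intro D _ _ g hpr ha
    simp only [map_add, map_sub, map_mul, map_pow, map_ofNat, map_one, map_neg]
    linear_combination (144 * (g a) ^ 3 + 528 * (g a)) * ha + (152 * (g a) ^ 4 + 154 * (g a) ^ 2 + 6) * hpr

private lemma zcMem9 {S : Type u} [CommRing S] (a : S)
    (hf : IsNilpotent (a ^ 5 - 5 * a ^ 3 + 4 * a)) (h30 : IsNilpotent (30 : S)) :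
    IsNilpotent ((-6 * a ^ 4 + 6) ^ 2 - (-6 * a ^ 4 + 6)) := by
  apply zcCorner a _ hf h30
  · intro D _ _ g hpr ha
    simp only [map_add, map_sub, map_mul, map_pow, map_ofNat, map_one, map_neg]
    linear_combination (36 * (g a) ^ 6 + 36 * (g a) ^ 5 + 36 * (g a) ^ 4 + 36 * (g a) ^ 3 - 30 * (g a) ^ 2 - 30 * (g a) - 30) * ha + (-15 * (g a) + 15) * hpr
  · intro D _ _ g hpr ha
    simp only [map_add, map_sub, map_mul, map_pow, map_ofNat, map_one, map_neg]
    linear_combination (36 * (g a) ^ 5 + 36 * (g a) ^ 3 - 30 * (g a)) * ha + (-10 * (g a) ^ 2 + 10) * hpr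
  · intro D _ _ g hpr ha
    simp only [map_add, map_sub, map_mul, map_pow, map_ofNat, map_one, map_neg]
    linear_combination (36 * (g a) ^ 3) * ha + (-6 * (g a) ^ 4 + 6) * hpr

private lemma zcMem10 {S : Type u} [CommRing S] (a : S)
    (hf : IsNilpotent (a ^ 5 - 5 * a ^ 3 + 4 * a)) (h30 : IsNilpotent (30 : S)) :
    IsNilpotent ((-6 * a ^ 4 + 6) * (-15 * a ^ 2 + 25)) := by
  apply zcCorner a _ hf h30
  · intro D _ _ g hpr ha
    simp only [map_add, map_sub, map_mul, map_pow, map_ofNat, map_one, map_neg]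
    linear_combination (90 * (g a) ^ 4 + 90 * (g a) ^ 3 - 60 * (g a) ^ 2 - 60 * (g a) - 150) * ha + (-75 * (g a) + 75) * hpr
  · intro D _ _ g hpr ha
    simp only [map_add, map_sub, map_mul, map_pow, map_ofNat, map_one, map_neg]
    linear_combination (90 * (g a) ^ 3 - 60 * (g a)) * ha + (-50 * (g a) ^ 2 + 50) * hpr
  · intro D _ _ g hpr ha
    simp only [map_add, map_sub, map_mul, map_pow, map_ofNat, map_one, map_neg]
    linear_combination (90 * (g a)) * ha + (-30 * (g a) ^ 4 + 30) * hpr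

private lemma zcMem11 {S : Type u} [CommRing S] (a : S)
    (hf : IsNilpotent (a ^ 5 - 5 * a ^ 3 + 4 * a)) (h30 : IsNilpotent (30 : S)) :
    IsNilpotent ((-15 * a ^ 2 + 25) ^ 2 - (-15 * a ^ 2 + 25)) := by
  apply zcCorner a _ hf h30
  · intro D _ _ g hpr ha
    simp only [map_add, map_sub, map_mul, map_pow, map_ofNat, map_one, map_neg]
    linear_combination (225 * (g a) ^ 2 + 225 * (g a) - 510) * ha + (-255 * (g a) + 300) * hpr
  · intro D _ _ g hpr ha
    simp only [map_add, map_sub, map_mul, map_pow, map_ofNat, map_one, map_neg]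
    linear_combination (225 * (g a)) * ha + (-170 * (g a) ^ 2 + 200) * hpr
  · intro D _ _ g hpr ha
    simp only [map_add, map_sub, map_mul, map_pow, map_ofNat, map_one, map_neg]
    linear_combination (0) * ha + (45 * (g a) ^ 4 - 147 * (g a) ^ 2 + 120) * hpr

private lemma zcMem12 {S : Type u} [CommRing S] (a : S)
    (hf : IsNilpotent (a ^ 5 - 5 * a ^ 3 + 4 * a)) (h30 : IsNilpotent (30 : S)) :
    IsNilpotent (a ^ 2 - ((-6 * a ^ 4 + 6) - (-15 * a ^ 2 + 25)) - (1 - 2 * (12 * a ^ 4 + 22 * a ^ 2 + 6))) := by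
  apply zcCorner a _ hf h30
  · intro D _ _ g hpr ha
    simp only [map_add, map_sub, map_mul, map_pow, map_ofNat, map_one, map_neg]
    linear_combination (30 * (g a) ^ 2 + 30 * (g a) + 60) * ha + (30 * (g a) + 15) * hpr
  · intro D _ _ g hpr ha
    simp only [map_add, map_sub, map_mul, map_pow, map_ofNat, map_one, map_neg]
    linear_combination (30 * (g a)) * ha + (20 * (g a) ^ 2 + 10) * hpr
  · intro D _ _ g hpr ha
    simp only [map_add, map_sub, map_mul, map_pow, map_ofNat, map_one, map_neg]
    linear_combination (0) * ha + (6 * (g a) ^ 4 + 6 * (g a) ^ 2 + 6) * hpr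


private lemma zcCore1 {S : Type u} [CommRing S] (a : S)
    (hf : IsNilpotent (a ^ 5 - 5 * a ^ 3 + 4 * a)) (h30 : IsNilpotent (30 : S)) :
    ∃ p q w : S, p ^ 3 = p ∧ q ^ 3 = q ∧ IsNilpotent w ∧ a = p + q + w := by
  obtain ⟨A, hA, hAn⟩ := zcIdem _ (zcMem1 a hf h30)
  obtain ⟨B0, hB0, hB0n⟩ := zcIdem _ (zcMem2 a hf h30)
  obtain ⟨A', hA', hA'n⟩ := zcIdem _ (zcMem4 a hf h30)
  obtain ⟨B0', hB0', hB0'n⟩ := zcIdem _ (zcMem5 a hf h30)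
  have hB : (B0 - B0 * A) ^ 2 = B0 - B0 * A := by
    linear_combination (1 - A) ^ 2 * hB0 + B0 * hA
  have hAB : A * (B0 - B0 * A) = 0 := by linear_combination (-B0) * hA
  have hp : (A - (B0 - B0 * A)) ^ 3 = A - (B0 - B0 * A) := by
    linear_combination (A + 1) * hA - ((B0 - B0 * A) + 1) * hB - (3 * (A - (B0 - B0 * A))) * hAB
  have hB' : (B0' - B0' * A') ^ 2 = B0' - B0' * A' := by
    linear_combination (1 - A') ^ 2 * hB0' + B0' * hA'
  have hAB' : A' * (B0' - B0' * A') = 0 := by linear_combination (-B0') * hA'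
  have hq : (A' - (B0' - B0' * A')) ^ 3 = A' - (B0' - B0' * A') := by
    linear_combination (A' + 1) * hA' - ((B0' - B0' * A') + 1) * hB' - (3 * (A' - (B0' - B0' * A'))) * hAB'
  refine ⟨A - (B0 - B0 * A), A' - (B0' - B0' * A'),
    a - (A - (B0 - B0 * A)) - (A' - (B0' - B0' * A')), hp, hq, ?_, by ring⟩
  rw [← mem_nilradical]
  have nA : A - (18 * a ^ 4 + 12 * a ^ 3 + 20 * a ^ 2 + 41 * a) ∈ nilradical S := mem_nilradical.mpr hAn
  have nB0 : B0 - (18 * a ^ 4 - 12 * a ^ 3 + 20 * a ^ 2 + 4 * a) ∈ nilradical S := mem_nilradical.mpr hB0n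
  have nA' : A' - (24 * a ^ 4 + 18 * a ^ 3 + 6 * a ^ 2 + 12 * a) ∈ nilradical S := mem_nilradical.mpr hA'n
  have nB0' : B0' - (24 * a ^ 4 + 12 * a ^ 3 + 6 * a ^ 2 - 12 * a) ∈ nilradical S := mem_nilradical.mpr hB0'n
  have n3 : (18 * a ^ 4 + 12 * a ^ 3 + 20 * a ^ 2 + 41 * a) * (18 * a ^ 4 - 12 * a ^ 3 + 20 * a ^ 2 + 4 * a) ∈ nilradical S := mem_nilradical.mpr (zcMem3 a hf h30)
  have n6 : (24 * a ^ 4 + 18 * a ^ 3 + 6 * a ^ 2 + 12 * a) * (24 * a ^ 4 + 12 * a ^ 3 + 6 * a ^ 2 - 12 * a) ∈ nilradical S := mem_nilradical.mpr (zcMem6 a hf h30)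
  have n7 : a - ((18 * a ^ 4 + 12 * a ^ 3 + 20 * a ^ 2 + 41 * a) - (18 * a ^ 4 - 12 * a ^ 3 + 20 * a ^ 2 + 4 * a) + (24 * a ^ 4 + 18 * a ^ 3 + 6 * a ^ 2 + 12 * a) - (24 * a ^ 4 + 12 * a ^ 3 + 6 * a ^ 2 - 12 * a)) ∈ nilradical S :=
    mem_nilradical.mpr (zcMem7 a hf h30)
  have nBA : B0 * A ∈ nilradical S := by
    have e : B0 * A = (B0 - (18 * a ^ 4 - 12 * a ^ 3 + 20 * a ^ 2 + 4 * a)) * A + (18 * a ^ 4 - 12 * a ^ 3 + 20 * a ^ 2 + 4 * a) * (A - (18 * a ^ 4 + 12 * a ^ 3 + 20 * a ^ 2 + 41 * a)) + (18 * a ^ 4 + 12 * a ^ 3 + 20 * a ^ 2 + 41 * a) * (18 * a ^ 4 - 12 * a ^ 3 + 20 * a ^ 2 + 4 * a) := by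
      ring
    rw [e]
    exact add_mem (add_mem (Ideal.mul_mem_right _ _ nB0) (Ideal.mul_mem_left _ _ nA)) n3
  have nBA' : B0' * A' ∈ nilradical S := by
    have e : B0' * A' = (B0' - (24 * a ^ 4 + 12 * a ^ 3 + 6 * a ^ 2 - 12 * a)) * A' + (24 * a ^ 4 + 12 * a ^ 3 + 6 * a ^ 2 - 12 * a) * (A' - (24 * a ^ 4 + 18 * a ^ 3 + 6 * a ^ 2 + 12 * a)) + (24 * a ^ 4 + 18 * a ^ 3 + 6 * a ^ 2 + 12 * a) * (24 * a ^ 4 + 12 * a ^ 3 + 6 * a ^ 2 - 12 * a) := by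
      ring
    rw [e]
    exact add_mem (add_mem (Ideal.mul_mem_right _ _ nB0') (Ideal.mul_mem_left _ _ nA')) n6
  have efinal : a - (A - (B0 - B0 * A)) - (A' - (B0' - B0' * A'))
      = (a - ((18 * a ^ 4 + 12 * a ^ 3 + 20 * a ^ 2 + 41 * a) - (18 * a ^ 4 - 12 * a ^ 3 + 20 * a ^ 2 + 4 * a) + (24 * a ^ 4 + 18 * a ^ 3 + 6 * a ^ 2 + 12 * a) - (24 * a ^ 4 + 12 * a ^ 3 + 6 * a ^ 2 - 12 * a))) - (A - (18 * a ^ 4 + 12 * a ^ 3 + 20 * a ^ 2 + 41 * a))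
        + ((B0 - (18 * a ^ 4 - 12 * a ^ 3 + 20 * a ^ 2 + 4 * a)) - B0 * A) - (A' - (24 * a ^ 4 + 18 * a ^ 3 + 6 * a ^ 2 + 12 * a)) + ((B0' - (24 * a ^ 4 + 12 * a ^ 3 + 6 * a ^ 2 - 12 * a)) - B0' * A') := by ring
  rw [efinal]
  exact add_mem (sub_mem (add_mem (sub_mem n7 nA) (sub_mem nB0 nBA)) nA') (sub_mem nB0' nBA')

private lemma zcCore2 {S : Type u} [CommRing S] (a : S)
    (hf : IsNilpotent (a ^ 5 - 5 * a ^ 3 + 4 * a)) (h30 : IsNilpotent (30 : S)) :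
    ∃ p v w : S, p ^ 3 = p ∧ v ^ 2 = 1 ∧ IsNilpotent w ∧ a ^ 2 = p + v + w := by
  obtain ⟨A, hA, hAn⟩ := zcIdem _ (zcMem9 a hf h30)
  obtain ⟨B0, hB0, hB0n⟩ := zcIdem _ (zcMem11 a hf h30)
  obtain ⟨E, hE, hEn⟩ := zcIdem _ (zcMem8 a hf h30)
  have hB : (B0 - B0 * A) ^ 2 = B0 - B0 * A := by
    linear_combination (1 - A) ^ 2 * hB0 + B0 * hA
  have hAB : A * (B0 - B0 * A) = 0 := by linear_combination (-B0) * hA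
  have hp : (A - (B0 - B0 * A)) ^ 3 = A - (B0 - B0 * A) := by
    linear_combination (A + 1) * hA - ((B0 - B0 * A) + 1) * hB - (3 * (A - (B0 - B0 * A))) * hAB
  have hv : (1 - 2 * E) ^ 2 = 1 := by linear_combination 4 * hE
  refine ⟨A - (B0 - B0 * A), 1 - 2 * E,
    a ^ 2 - (A - (B0 - B0 * A)) - (1 - 2 * E), hp, hv, ?_, by ring⟩
  rw [← mem_nilradical]
  have nA : A - (-6 * a ^ 4 + 6) ∈ nilradical S := mem_nilradical.mpr hAn
  have nB0 : B0 - (-15 * a ^ 2 + 25) ∈ nilradical S := mem_nilradical.mpr hB0n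
  have nE : E - (12 * a ^ 4 + 22 * a ^ 2 + 6) ∈ nilradical S := mem_nilradical.mpr hEn
  have n10 : (-6 * a ^ 4 + 6) * (-15 * a ^ 2 + 25) ∈ nilradical S := mem_nilradical.mpr (zcMem10 a hf h30)
  have n12 : a ^ 2 - ((-6 * a ^ 4 + 6) - (-15 * a ^ 2 + 25)) - (1 - 2 * (12 * a ^ 4 + 22 * a ^ 2 + 6)) ∈ nilradical S :=
    mem_nilradical.mpr (zcMem12 a hf h30)
  have nBA : B0 * A ∈ nilradical S := by
    have e : B0 * A = (B0 - (-15 * a ^ 2 + 25)) * A + (-15 * a ^ 2 + 25) * (A - (-6 * a ^ 4 + 6)) + (-6 * a ^ 4 + 6) * (-15 * a ^ 2 + 25) := by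
      ring
    rw [e]
    exact add_mem (add_mem (Ideal.mul_mem_right _ _ nB0) (Ideal.mul_mem_left _ _ nA)) n10
  have efinal : a ^ 2 - (A - (B0 - B0 * A)) - (1 - 2 * E)
      = (a ^ 2 - ((-6 * a ^ 4 + 6) - (-15 * a ^ 2 + 25)) - (1 - 2 * (12 * a ^ 4 + 22 * a ^ 2 + 6))) - (A - (-6 * a ^ 4 + 6))
        + ((B0 - (-15 * a ^ 2 + 25)) - B0 * A) + 2 * (E - (12 * a ^ 4 + 22 * a ^ 2 + 6)) := by ring
  rw [efinal]
  exact add_mem (add_mem (sub_mem n12 nA) (sub_mem nB0 nBA)) (Ideal.mul_mem_left _ _ nE)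

private lemma zcFvalTrip {T : Type u} [CommRing T] (p q : T) (hp : p ^ 3 = p) (hq : q ^ 3 = q) :
    (p + q) ^ 5 - 5 * (p + q) ^ 3 + 4 * (p + q) = 0 := by
  linear_combination (p ^ 2 + 5 * p * q + 10 * q ^ 2 - 4) * hp
    + (10 * p ^ 2 + 5 * p * q + q ^ 2 - 4) * hq

private lemma zcFvalInv {T : Type u} [CommRing T] (p v : T) (hp : p ^ 3 = p) (hv : v ^ 2 = 1) :
    (p + v) ^ 5 - 5 * (p + v) ^ 3 + 4 * (p + v) = 0 := by
  linear_combination (p ^ 2 + 5 * p * v + 10 * v ^ 2 - 4) * hp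
    + (10 * p ^ 2 * v + 5 * p * v ^ 2 + v ^ 3 - 4 * v) * hv

private lemma zcFAdd {T : Type u} [CommRing T] (b w : T)
    (hb : b ^ 5 - 5 * b ^ 3 + 4 * b = 0) (hw : IsNilpotent w) :
    IsNilpotent ((b + w) ^ 5 - 5 * (b + w) ^ 3 + 4 * (b + w)) := by
  have key : (b + w) ^ 5 - 5 * (b + w) ^ 3 + 4 * (b + w)
      = w * (4 - 5 * w ^ 2 + w ^ 4 - 15 * b * w + 5 * b * w ^ 3 - 15 * b ^ 2
        + 10 * b ^ 2 * w ^ 2 + 10 * b ^ 3 * w + 5 * b ^ 4) := by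
    linear_combination hb
  rw [key]
  exact zcNilpMul _ _ hw

private lemma zcNilpIn {R : Type u} [Ring R] {T : Subring R} {x : T}
    (h : IsNilpotent ((x : R))) : IsNilpotent x := by
  obtain ⟨n, hn⟩ := h
  exact ⟨n, Subtype.ext (by push_cast; exact hn)⟩

private lemma zcNilpOut {R : Type u} [Ring R] {T : Subring R} {x : T}
    (h : IsNilpotent x) : IsNilpotent (x : R) := by
  obtain ⟨n, hn⟩ := h
  refine ⟨n, ?_⟩
  have := congrArg (fun t : T => (t : R)) hn
  push_cast at this
  exact this

private lemma zcNilpOfPow {M : Type u} [MonoidWithZero M] {x : M} {k : ℕ}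
    (h : IsNilpotent (x ^ k)) : IsNilpotent x := by
  obtain ⟨n, hn⟩ := h
  exact ⟨k * n, by rw [pow_mul, hn]⟩

private lemma zc120 {R : Type u} [Ring R] (h : IsNilpotent (120 : R)) :
    IsNilpotent (30 : R) := by
  apply zcNilpOfPow (k := 4)
  have e : (30 : R) ^ 4 = 120 * 6750 := by norm_num
  rw [e]
  exact Commute.isNilpotent_mul_right (show (120 : R) * 6750 = 6750 * 120 by norm_num) h

private lemma zc720 {R : Type u} [Ring R] (h : IsNilpotent (720 : R)) :
    IsNilpotent (30 : R) := by
  apply zcNilpOfPow (k := 4)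
  have e : (30 : R) ^ 4 = 720 * 1125 := by norm_num
  rw [e]
  exact Commute.isNilpotent_mul_right (show (720 : R) * 1125 = 1125 * 720 by norm_num) h

private lemma zcKeyTrip {R : Type u} [Ring R] (p q w : R) (hp : p ^ 3 = p) (hq2 : q ^ 3 = q)
    (hw : IsNilpotent w) (hpq : Commute p q) (hpw : Commute p w) (hqw : Commute q w) :
    IsNilpotent ((p + q + w) ^ 5 - 5 * (p + q + w) ^ 3 + 4 * (p + q + w)) := by
  have hcomm : ∀ y ∈ ({p, q, w} : Set R), ∀ z ∈ ({p, q, w} : Set R), y * z = z * y := by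
    rintro y hy z hz
    simp only [Set.mem_insert_iff, Set.mem_singleton_iff] at hy hz
    rcases hy with rfl | rfl | rfl <;> rcases hz with rfl | rfl | rfl <;>
      first
      | rfl
      | exact hpq.eq
      | exact hpq.symm.eq
      | exact hpw.eq
      | exact hpw.symm.eq
      | exact hqw.eq
      | exact hqw.symm.eq
  letI : CommRing (Subring.closure ({p, q, w} : Set R)) := Subring.closureCommRingOfComm hcomm
  have hpT : p ∈ Subring.closure ({p, q, w} : Set R) := Subring.subset_closure (by simp)
  have hqT : q ∈ Subring.closure ({p, q, w} : Set R) := Subring.subset_closure (by simp)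
  have hwT : w ∈ Subring.closure ({p, q, w} : Set R) := Subring.subset_closure (by simp)
  have hp' : (⟨p, hpT⟩ : Subring.closure ({p, q, w} : Set R)) ^ 3 = ⟨p, hpT⟩ :=
    Subtype.ext (by push_cast; exact hp)
  have hq' : (⟨q, hqT⟩ : Subring.closure ({p, q, w} : Set R)) ^ 3 = ⟨q, hqT⟩ :=
    Subtype.ext (by push_cast; exact hq2)
  have hw' : IsNilpotent (⟨w, hwT⟩ : Subring.closure ({p, q, w} : Set R)) := zcNilpIn hw
  have h1 := zcFAdd _ _ (zcFvalTrip _ _ hp' hq') hw'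
  obtain ⟨n, hn⟩ := h1
  refine ⟨n, ?_⟩
  have h3 := congrArg (fun t : Subring.closure ({p, q, w} : Set R) => (t : R)) hn
  push_cast at h3
  exact h3

private lemma zcKeyInv {R : Type u} [Ring R] (p v w : R) (hp : p ^ 3 = p) (hv2 : v ^ 2 = 1)
    (hw : IsNilpotent w) (hpv : Commute p v) (hpw : Commute p w) (hvw : Commute v w) :
    IsNilpotent ((p + v + w) ^ 5 - 5 * (p + v + w) ^ 3 + 4 * (p + v + w)) := by
  have hcomm : ∀ y ∈ ({p, v, w} : Set R), ∀ z ∈ ({p, v, w} : Set R), y * z = z * y := by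
    rintro y hy z hz
    simp only [Set.mem_insert_iff, Set.mem_singleton_iff] at hy hz
    rcases hy with rfl | rfl | rfl <;> rcases hz with rfl | rfl | rfl <;>
      first
      | rfl
      | exact hpv.eq
      | exact hpv.symm.eq
      | exact hpw.eq
      | exact hpw.symm.eq
      | exact hvw.eq
      | exact hvw.symm.eq
  letI : CommRing (Subring.closure ({p, v, w} : Set R)) := Subring.closureCommRingOfComm hcomm
  have hpT : p ∈ Subring.closure ({p, v, w} : Set R) := Subring.subset_closure (by simp)
  have hvT : v ∈ Subring.closure ({p, v, w} : Set R) := Subring.subset_closure (by simp)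
  have hwT : w ∈ Subring.closure ({p, v, w} : Set R) := Subring.subset_closure (by simp)
  have hp' : (⟨p, hpT⟩ : Subring.closure ({p, v, w} : Set R)) ^ 3 = ⟨p, hpT⟩ :=
    Subtype.ext (by push_cast; exact hp)
  have hv' : (⟨v, hvT⟩ : Subring.closure ({p, v, w} : Set R)) ^ 2 = 1 :=
    Subtype.ext (by push_cast; exact hv2)
  have hw' : IsNilpotent (⟨w, hwT⟩ : Subring.closure ({p, v, w} : Set R)) := zcNilpIn hw
  have h1 := zcFAdd _ _ (zcFvalInv _ _ hp' hv') hw'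
  obtain ⟨n, hn⟩ := h1
  refine ⟨n, ?_⟩
  have h3 := congrArg (fun t : Subring.closure ({p, v, w} : Set R) => (t : R)) hn
  push_cast at h3
  exact h3

private lemma zcSingletonComm {R : Type u} [Ring R] (x : R) :
    ∀ y ∈ ({x} : Set R), ∀ z ∈ ({x} : Set R), y * z = z * y := by
  rintro y hy z hz
  simp only [Set.mem_singleton_iff] at hy hz
  subst hy; subst hz; rfl

/-- A ring is Zhou nil-clean if every element is the sum of two tripotents
and a nilpotent that pairwise commute. -/
def ZhouNilClean (R : Type*) [Ring R] : Prop :=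
  ∀ a : R, ∃ p q w : R, p ^ 3 = p ∧ q ^ 3 = q ∧ IsNilpotent w ∧
    Commute p q ∧ Commute p w ∧ Commute q w ∧ a = p + q + w

theorem stmt_17 (R : Type*) [Ring R] :
    ZhouNilClean R ↔
      ∀ x : R, ∃ p v w : R, p ^ 3 = p ∧ v ^ 2 = 1 ∧ IsNilpotent w ∧
        Commute p v ∧ Commute p w ∧ Commute v w ∧ x ^ 2 = p + v + w := by
  constructor
  · intro h x
    have key : ∀ b : R, IsNilpotent (b ^ 5 - 5 * b ^ 3 + 4 * b) := by
      intro b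
      obtain ⟨p, q, w, hp, hq, hw, hpq, hpw, hqw, hb⟩ := h b
      rw [hb]
      exact zcKeyTrip p q w hp hq hw hpq hpw hqw
    have h30 : IsNilpotent (30 : R) := by
      apply zc120
      have h3 := key 3
      norm_num at h3
      exact h3
    letI : CommRing (Subring.closure ({x} : Set R)) :=
      Subring.closureCommRingOfComm (zcSingletonComm x)
    have hxT : x ∈ Subring.closure ({x} : Set R) := Subring.subset_closure (by simp)
    have hfS : IsNilpotent ((⟨x, hxT⟩ : Subring.closure ({x} : Set R)) ^ 5
        - 5 * (⟨x, hxT⟩ : Subring.closure ({x} : Set R)) ^ 3 + 4 * ⟨x, hxT⟩) := by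
      apply zcNilpIn
      push_cast
      exact key x
    have h30S : IsNilpotent ((30 : Subring.closure ({x} : Set R))) := by
      apply zcNilpIn
      exact h30
    obtain ⟨p, v, w, hp, hv, hw, heq⟩ := zcCore2 (⟨x, hxT⟩ : Subring.closure ({x} : Set R)) hfS h30S
    refine ⟨p, v, w, ?_, ?_, zcNilpOut hw, ?_, ?_, ?_, ?_⟩
    · have := congrArg (fun t : Subring.closure ({x} : Set R) => (t : R)) hp
      push_cast at this; exact this
    · have := congrArg (fun t : Subring.closure ({x} : Set R) => (t : R)) hv
      push_cast at this; exact this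
    · show (p : R) * v = (v : R) * p
      have := congrArg (fun t : Subring.closure ({x} : Set R) => (t : R)) (mul_comm p v)
      push_cast at this; exact this
    · show (p : R) * w = (w : R) * p
      have := congrArg (fun t : Subring.closure ({x} : Set R) => (t : R)) (mul_comm p w)
      push_cast at this; exact this
    · show (v : R) * w = (w : R) * v
      have := congrArg (fun t : Subring.closure ({x} : Set R) => (t : R)) (mul_comm v w)
      push_cast at this; exact this
    · have := congrArg (fun t : Subring.closure ({x} : Set R) => (t : R)) heq
      push_cast at this; exact this
  · intro h a
    have sqkey : ∀ y : R, IsNilpotent ((y ^ 2) ^ 5 - 5 * (y ^ 2) ^ 3 + 4 * (y ^ 2)) := by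
      intro y
      obtain ⟨p, v, w, hp, hv, hw, hpv, hpw, hvw, hy⟩ := h y
      rw [hy]
      exact zcKeyInv p v w hp hv hw hpv hpw hvw
    have h30 : IsNilpotent (30 : R) := by
      apply zc720
      have h2 := sqkey 2
      norm_num at h2
      exact h2
    have key : ∀ b : R, IsNilpotent (b ^ 5 - 5 * b ^ 3 + 4 * b) := by
      intro b
      letI : CommRing (Subring.closure ({b} : Set R)) :=
        Subring.closureCommRingOfComm (zcSingletonComm b)
      have hbT : b ∈ Subring.closure ({b} : Set R) := Subring.subset_closure (by simp)
      set b' : Subring.closure ({b} : Set R) := ⟨b, hbT⟩ with hb'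
      have n1 : IsNilpotent ((b' ^ 2) ^ 5 - 5 * (b' ^ 2) ^ 3 + 4 * (b' ^ 2)) := by
        apply zcNilpIn
        push_cast
        exact sqkey b
      have n2 : IsNilpotent (((b' + 1) ^ 2) ^ 5 - 5 * ((b' + 1) ^ 2) ^ 3 + 4 * ((b' + 1) ^ 2)) := by
        apply zcNilpIn
        push_cast
        exact sqkey (b + 1)
      have n30 : IsNilpotent ((30 : Subring.closure ({b} : Set R))) := by
        apply zcNilpIn
        exact h30
      have cert : (b' ^ 5 - 5 * b' ^ 3 + 4 * b') ^ 2
          = 30 * (-3 * b' ^ 14 - 12 * b' ^ 13 - 29 * b' ^ 12 - 41 * b' ^ 11 - 18 * b' ^ 10 + 31 * b' ^ 9 + 62 * b' ^ 8 + 39 * b' ^ 7 - 6 * b' ^ 6 - 19 * b' ^ 5 - 8 * b' ^ 4 + 2 * b' ^ 3 + 2 * b' ^ 2)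
            + (-8 * b' ^ 5 + 10 * b' ^ 4 + 10 * b' ^ 3 + 10 * b' ^ 2 - 2 * b' - 5) * ((b' ^ 2) ^ 5 - 5 * (b' ^ 2) ^ 3 + 4 * (b' ^ 2))
            + (8 * b' ^ 5 - 10 * b' ^ 3 + 2 * b') * (((b' + 1) ^ 2) ^ 5 - 5 * ((b' + 1) ^ 2) ^ 3 + 4 * ((b' + 1) ^ 2)) := by
        ring
      have hsq : IsNilpotent ((b' ^ 5 - 5 * b' ^ 3 + 4 * b') ^ 2) := by
        rw [cert, ← mem_nilradical]
        exact add_mem (add_mem (Ideal.mul_mem_right _ _ (mem_nilradical.mpr n30))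
          (Ideal.mul_mem_left _ _ (mem_nilradical.mpr n1)))
          (Ideal.mul_mem_left _ _ (mem_nilradical.mpr n2))
      have hnb := zcNilpOut (zcNilpOfPow hsq)
      push_cast at hnb
      exact hnb
    letI : CommRing (Subring.closure ({a} : Set R)) :=
      Subring.closureCommRingOfComm (zcSingletonComm a)
    have haT : a ∈ Subring.closure ({a} : Set R) := Subring.subset_closure (by simp)
    have hfS : IsNilpotent ((⟨a, haT⟩ : Subring.closure ({a} : Set R)) ^ 5
        - 5 * (⟨a, haT⟩ : Subring.closure ({a} : Set R)) ^ 3 + 4 * ⟨a, haT⟩) := by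
      apply zcNilpIn
      push_cast
      exact key a
    have h30S : IsNilpotent ((30 : Subring.closure ({a} : Set R))) := by
      apply zcNilpIn
      exact h30
    obtain ⟨p, q, w, hp, hq, hw, heq⟩ := zcCore1 (⟨a, haT⟩ : Subring.closure ({a} : Set R)) hfS h30S
    refine ⟨p, q, w, ?_, ?_, zcNilpOut hw, ?_, ?_, ?_, ?_⟩
    · have := congrArg (fun t : Subring.closure ({a} : Set R) => (t : R)) hp
      push_cast at this; exact this
    · have := congrArg (fun t : Subring.closure ({a} : Set R) => (t : R)) hq
      push_cast at this; exact this
    · show (p : R) * q = (q : R) * p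
      have := congrArg (fun t : Subring.closure ({a} : Set R) => (t : R)) (mul_comm p q)
      push_cast at this; exact this
    · show (p : R) * w = (w : R) * p
      have := congrArg (fun t : Subring.closure ({a} : Set R) => (t : R)) (mul_comm p w)
      push_cast at this; exact this
    · show (q : R) * w = (w : R) * q
      have := congrArg (fun t : Subring.closure ({a} : Set R) => (t : R)) (mul_comm q w)
      push_cast at this; exact this
    · have := congrArg (fun t : Subring.closure ({a} : Set R) => (t : R)) heq
      push_cast at this; exact this
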